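/- Let q > 0, q ≠ 1, and p ∈ ℕ. For the Dyson realization of U_q[sl(2)] on the Fock space F(1) (H|l⟩ = (p-2l)|l⟩, E|l⟩ = [l][p-l+1]|l-1⟩, F|l⟩ = |l+1⟩), the subspace F₁ = span{|l⟩ : l > p} is invariant under H, E, F, but the subspace F₀ = span{|l⟩ : l ≤ p} is NOT invariant (since F|p⟩ = |p+1⟩ ∉ F₀). Hence the Dyson representation on F(1) is indecomposable but not irreducible when p ∈ ℕ. -/
import Mathlib


open Finsupp

noncomputable def qb (q x : ℝ) : ℝ := (q ^ x - q ^ (-x)) / (q - q⁻¹)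

lemma qb_zero (q : ℝ) : qb q 0 = 0 := by simp [qb]

lemma span_eq_supported (s : Set ℕ) :
    Submodule.span ℂ {w : ℕ →₀ ℂ | ∃ l : ℕ, l ∈ s ∧ w = single l 1}
      = Finsupp.supported ℂ ℂ s := by
  rw [Finsupp.supported_eq_span_single]
  congr 1
  ext w
  constructor
  · rintro ⟨l, hl, rfl⟩; exact ⟨l, hl, rfl⟩
  · rintro ⟨l, hl, rfl⟩; exact ⟨l, hl, rfl⟩

theorem dyson_sl2_indecomposable_not_irreducible (q : ℝ) (p : ℕ) (hq : 0 < q) (hq1 : q ≠ 1)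
    (E F H : (ℕ →₀ ℂ) →ₗ[ℂ] (ℕ →₀ ℂ))
    (hH : ∀ l : ℕ, H (single l 1) = (((p : ℝ) - 2 * l : ℝ) : ℂ) • single l 1)
    (hE0 : E (single 0 1) = 0)
    (hE : ∀ l : ℕ, E (single (l + 1) 1) =
      ((qb q ((l : ℝ) + 1) * qb q ((p : ℝ) - ((l : ℝ) + 1) + 1) : ℝ) : ℂ) • single l 1)
    (hF : ∀ l : ℕ, F (single l 1) = single (l + 1) 1) :
    (∀ v ∈ Submodule.span ℂ {w : ℕ →₀ ℂ | ∃ l : ℕ, p < l ∧ w = single l 1},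
       H v ∈ Submodule.span ℂ {w : ℕ →₀ ℂ | ∃ l : ℕ, p < l ∧ w = single l 1} ∧
       E v ∈ Submodule.span ℂ {w : ℕ →₀ ℂ | ∃ l : ℕ, p < l ∧ w = single l 1} ∧
       F v ∈ Submodule.span ℂ {w : ℕ →₀ ℂ | ∃ l : ℕ, p < l ∧ w = single l 1}) ∧
    ¬ (∀ v ∈ Submodule.span ℂ {w : ℕ →₀ ℂ | ∃ l : ℕ, l ≤ p ∧ w = single l 1},
         F v ∈ Submodule.span ℂ {w : ℕ →₀ ℂ | ∃ l : ℕ, l ≤ p ∧ w = single l 1}) ∧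
    Submodule.span ℂ {w : ℕ →₀ ℂ | ∃ l : ℕ, p < l ∧ w = single l 1} ≠ ⊥ ∧
    Submodule.span ℂ {w : ℕ →₀ ℂ | ∃ l : ℕ, p < l ∧ w = single l 1} ≠ ⊤ ∧
    ¬ ∃ W : Submodule ℂ (ℕ →₀ ℂ),
        IsCompl (Submodule.span ℂ {w : ℕ →₀ ℂ | ∃ l : ℕ, p < l ∧ w = single l 1}) W ∧
        (∀ v ∈ W, H v ∈ W ∧ E v ∈ W ∧ F v ∈ W) := by
  set S : Submodule ℂ (ℕ →₀ ℂ) :=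
    Submodule.span ℂ {w : ℕ →₀ ℂ | ∃ l : ℕ, p < l ∧ w = single l 1} with hSdef
  have hspan : S = Finsupp.supported ℂ ℂ {l : ℕ | p < l} := span_eq_supported _
  have hspan2 : Submodule.span ℂ {w : ℕ →₀ ℂ | ∃ l : ℕ, l ≤ p ∧ w = single l 1}
      = Finsupp.supported ℂ ℂ {l : ℕ | l ≤ p} := span_eq_supported _
  -- invariance of S
  have hSinv : ∀ v ∈ S, H v ∈ S ∧ E v ∈ S ∧ F v ∈ S := by
    intro v hv
    refine Submodule.span_induction ?_ ?_ ?_ ?_ hv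
    · rintro w ⟨l, hl, rfl⟩
      refine ⟨?_, ?_, ?_⟩
      · rw [hH l]
        exact Submodule.smul_mem _ _ (Submodule.subset_span ⟨l, hl, rfl⟩)
      · obtain ⟨m, rfl⟩ : ∃ m, l = m + 1 := ⟨l - 1, by omega⟩
        rw [hE m]
        rcases eq_or_lt_of_le (Nat.lt_succ_iff.mp hl) with hmp | hmp
        · subst hmp
          have h0 : (p : ℝ) - ((p : ℝ) + 1) + 1 = 0 := by ring
          rw [h0, qb_zero, mul_zero]
          simp
        · exact Submodule.smul_mem _ _ (Submodule.subset_span ⟨m, hmp, rfl⟩)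
      · rw [hF l]
        exact Submodule.subset_span ⟨l + 1, by omega, rfl⟩
    · simp
    · intro x y _ _ hx hy
      exact ⟨by rw [map_add]; exact add_mem hx.1 hy.1,
        by rw [map_add]; exact add_mem hx.2.1 hy.2.1,
        by rw [map_add]; exact add_mem hx.2.2 hy.2.2⟩
    · intro c x _ hx
      exact ⟨by rw [map_smul]; exact Submodule.smul_mem _ _ hx.1,
        by rw [map_smul]; exact Submodule.smul_mem _ _ hx.2.1,
        by rw [map_smul]; exact Submodule.smul_mem _ _ hx.2.2⟩
  -- F does not preserve the lower space
  have hFnot : ¬ (∀ v ∈ Submodule.span ℂ {w : ℕ →₀ ℂ | ∃ l : ℕ, l ≤ p ∧ w = single l 1},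
      F v ∈ Submodule.span ℂ {w : ℕ →₀ ℂ | ∃ l : ℕ, l ≤ p ∧ w = single l 1}) := by
    intro h
    have hp : (single p 1 : ℕ →₀ ℂ) ∈
        Submodule.span ℂ {w : ℕ →₀ ℂ | ∃ l : ℕ, l ≤ p ∧ w = single l 1} :=
      Submodule.subset_span ⟨p, le_refl p, rfl⟩
    have hm := h _ hp
    rw [hF p, hspan2, Finsupp.mem_supported] at hm
    have hmem : (p + 1) ∈ (single (p + 1) (1 : ℂ)).support := by
      rw [Finsupp.support_single_ne_zero _ one_ne_zero]; simp
    have := hm hmem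
    simp only [Set.mem_setOf_eq] at this
    omega
  -- S ≠ ⊥
  have hne_bot : S ≠ ⊥ := by
    intro h
    have hmem : (single (p + 1) 1 : ℕ →₀ ℂ) ∈ S :=
      Submodule.subset_span ⟨p + 1, by omega, rfl⟩
    rw [h, Submodule.mem_bot] at hmem
    exact one_ne_zero (Finsupp.single_eq_zero.mp hmem)
  -- S ≠ ⊤
  have hne_top : S ≠ ⊤ := by
    intro h
    have hmem : (single 0 1 : ℕ →₀ ℂ) ∈ S := h ▸ Submodule.mem_top
    rw [hspan, Finsupp.mem_supported] at hmem
    have h0 : (0 : ℕ) ∈ (single 0 (1 : ℂ)).support := by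
      rw [Finsupp.support_single_ne_zero _ one_ne_zero]; simp
    have := hmem h0
    simp at this
  refine ⟨hSinv, hFnot, hne_bot, hne_top, ?_⟩
  rintro ⟨W, ⟨hdisj, hcodisj⟩, hWinv⟩
  -- F is mapDomain (·+1)
  have hFeq : ∀ v : ℕ →₀ ℂ, F v = Finsupp.mapDomain (· + 1) v := by
    have h : F = Finsupp.lmapDomain ℂ ℂ (· + 1) := by
      apply Finsupp.basisSingleOne.ext
      intro l
      simp only [Finsupp.coe_basisSingleOne, Finsupp.lmapDomain_apply,
        Finsupp.mapDomain_single]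
      exact hF l
    intro v; rw [h]; rfl
  have hFn : ∀ (n : ℕ) (v : ℕ →₀ ℂ), (⇑F)^[n] v = Finsupp.mapDomain (· + n) v := by
    intro n
    induction n with
    | zero =>
      intro v
      simp only [Function.iterate_zero, id_eq]
      rw [show (fun l : ℕ => l + 0) = id from rfl, Finsupp.mapDomain_id]
    | succ n ih =>
      intro v
      rw [Function.iterate_succ_apply', ih, hFeq, ← Finsupp.mapDomain_comp]
      rfl
  -- W ≠ ⊥
  have hWne : W ≠ ⊥ := by
    intro h
    rw [h, codisjoint_bot] at hcodisj
    exact hne_top hcodisj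
  obtain ⟨v, hvW, hv0⟩ := (Submodule.ne_bot_iff W).mp hWne
  -- iterate stays in W
  have hiter : ∀ n : ℕ, (⇑F)^[n] v ∈ W := by
    intro n
    induction n with
    | zero => exact hvW
    | succ n ih =>
      rw [Function.iterate_succ_apply']
      exact (hWinv _ ih).2.2
  -- iterate lands in S
  have hinS : (⇑F)^[p + 1] v ∈ S := by
    rw [hFn, hspan, Finsupp.mem_supported]
    intro a ha
    have := Finsupp.mapDomain_support ha
    rw [Finset.mem_image] at this
    obtain ⟨l, _, rfl⟩ := this
    simp only [Set.mem_setOf_eq]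
    omega
  have hzero : (⇑F)^[p + 1] v = 0 := by
    have := hdisj.le_bot ⟨hinS, hiter (p + 1)⟩
    simpa using this
  rw [hFn] at hzero
  have hinj : Function.Injective (fun l : ℕ => l + (p + 1)) := by
    exact add_left_injective (p + 1)
  have := Finsupp.mapDomain_injective hinj (by
    rw [hzero, Finsupp.mapDomain_zero] : Finsupp.mapDomain (· + (p + 1)) v
      = Finsupp.mapDomain (· + (p + 1)) 0)
  exact hv0 this
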